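/- Let the augmented system matrices be A = [[A₀, E₀],[0, I_p]] ∈ ℝ^{(n+p)×(n+p)}, C = [C₀, 0] ∈ ℝ^{p×(n+p)}. If the triple (A₀, E₀, C₀) has no invariant zeros (the Rosenbrock matrix [[A₀ - zI, E₀],[C₀,0]] has rank n+p for all z ∈ ℂ), then the pair (A, C) is observable. -/

import Mathlib

open Matrix Complex

lemma rank_eq_card_of_ker {m' n' : Type*} [Fintype m'] [Fintype n']
    (M : Matrix m' n' ℂ) (h : ∀ v : n' → ℂ, M *ᵥ v = 0 → v = 0) :
    M.rank = Fintype.card n' := by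
  have hk : LinearMap.ker M.mulVecLin = ⊥ := by
    rw [LinearMap.ker_eq_bot']
    intro v hv
    exact h v hv
  have := LinearMap.finrank_range_add_finrank_ker M.mulVecLin
  rw [hk, finrank_bot, add_zero, Module.finrank_pi] at this
  exact this

lemma ker_of_rank_eq_card {m' n' : Type*} [Fintype m'] [Fintype n']
    (M : Matrix m' n' ℂ) (h : M.rank = Fintype.card n') :
    ∀ v : n' → ℂ, M *ᵥ v = 0 → v = 0 := by
  have := LinearMap.finrank_range_add_finrank_ker M.mulVecLin
  rw [show Module.finrank ℂ ↥(LinearMap.range M.mulVecLin) = M.rank from rfl, h,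
    Module.finrank_pi ℂ] at this
  have hk : LinearMap.ker M.mulVecLin = ⊥ := by
    have h0 : Module.finrank ℂ (LinearMap.ker M.mulVecLin) = 0 := by omega
    exact Submodule.finrank_eq_zero.mp h0
  intro v hv
  have := LinearMap.ker_eq_bot'.mp hk v hv
  exact this

/-- If `(A₀, E₀, C₀)` has no invariant zeros, then the augmented pair
`A = [[A₀, E₀],[0, I_p]]`, `C = [C₀, 0]` is observable (PBH test over `ℂ`). -/
theorem stmt5 (n p : ℕ)
    (A₀ : Matrix (Fin n) (Fin n) ℝ) (E₀ : Matrix (Fin n) (Fin p) ℝ)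
    (C₀ : Matrix (Fin p) (Fin n) ℝ)
    (hrank : ∀ z : ℂ,
      (Matrix.fromBlocks (A₀.map (Complex.ofReal) - z • (1 : Matrix (Fin n) (Fin n) ℂ))
        (E₀.map Complex.ofReal) (C₀.map Complex.ofReal)
        (0 : Matrix (Fin p) (Fin p) ℂ)).rank = n + p) :
    ∀ z : ℂ,
      (Matrix.fromRows
        ((Matrix.fromBlocks A₀ E₀ (0 : Matrix (Fin p) (Fin n) ℝ)
            (1 : Matrix (Fin p) (Fin p) ℝ)).map Complex.ofReal
          - z • (1 : Matrix (Fin n ⊕ Fin p) (Fin n ⊕ Fin p) ℂ))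
        ((Matrix.fromCols C₀ (0 : Matrix (Fin p) (Fin p) ℝ)).map Complex.ofReal)).rank
      = n + p := by
  intro z
  have hR := ker_of_rank_eq_card
    (Matrix.fromBlocks (A₀.map (Complex.ofReal) - z • (1 : Matrix (Fin n) (Fin n) ℂ))
        (E₀.map Complex.ofReal) (C₀.map Complex.ofReal)
        (0 : Matrix (Fin p) (Fin p) ℂ))
    (by simp only [Fintype.card_sum, Fintype.card_fin]; exact hrank z)
  have := rank_eq_card_of_ker (Matrix.fromRows
        ((Matrix.fromBlocks A₀ E₀ (0 : Matrix (Fin p) (Fin n) ℝ)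
            (1 : Matrix (Fin p) (Fin p) ℝ)).map Complex.ofReal
          - z • (1 : Matrix (Fin n ⊕ Fin p) (Fin n ⊕ Fin p) ℂ))
        ((Matrix.fromCols C₀ (0 : Matrix (Fin p) (Fin p) ℝ)).map Complex.ofReal)) ?_
  · simp only [Fintype.card_sum, Fintype.card_fin] at this; exact this
  intro v hv
  -- decompose v
  set x : Fin n → ℂ := fun i => v (Sum.inl i) with hx
  set y : Fin p → ℂ := fun j => v (Sum.inr j) with hy
  have hvxy : v = Sum.elim x y := by ext (i | j) <;> rfl
  rw [hvxy] at hv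
  rw [Matrix.fromRows_mulVec] at hv
  have htop := congrArg (fun w => w ∘ Sum.inl) hv
  have hbot := congrArg (fun w => w ∘ Sum.inr) hv
  simp only [Sum.elim_comp_inl, Sum.elim_comp_inr] at htop hbot
  -- hbot : fromColumns C₀ 0 .map *ᵥ (x,y) = 0 : C₀x = 0
  have hC : (C₀.map Complex.ofReal) *ᵥ x = 0 := by
    have : (Matrix.fromCols C₀ (0 : Matrix (Fin p) (Fin p) ℝ)).map Complex.ofReal
        = Matrix.fromCols (C₀.map Complex.ofReal) (0 : Matrix (Fin p) (Fin p) ℂ) := by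
      ext i (j | j) <;> simp [Matrix.fromCols, Matrix.map]
    rw [this, Matrix.fromCols_mulVec_sumElim] at hbot
    simpa using hbot
  -- htop: block structure
  have hblk : (Matrix.fromBlocks A₀ E₀ (0 : Matrix (Fin p) (Fin n) ℝ)
            (1 : Matrix (Fin p) (Fin p) ℝ)).map Complex.ofReal
          - z • (1 : Matrix (Fin n ⊕ Fin p) (Fin n ⊕ Fin p) ℂ)
      = Matrix.fromBlocks
          (A₀.map Complex.ofReal - z • 1) (E₀.map Complex.ofReal)
          (0 : Matrix (Fin p) (Fin n) ℂ)
          ((1 : Matrix (Fin p) (Fin p) ℂ) - z • 1) := by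
    ext (i | i) (j | j) <;>
      simp [Matrix.fromBlocks, Matrix.map_apply, Matrix.one_apply, Matrix.smul_apply,
        apply_ite Complex.ofReal]
  rw [hblk, Matrix.fromBlocks_mulVec] at htop
  have htop1 : (A₀.map Complex.ofReal - z • 1) *ᵥ x + (E₀.map Complex.ofReal) *ᵥ y = 0 := by
    have := congrArg (fun w => w ∘ Sum.inl) htop
    simpa using this
  have htop2 : ((1 : Matrix (Fin p) (Fin p) ℂ) - z • 1) *ᵥ y = 0 := by
    have := congrArg (fun w => w ∘ Sum.inr) htop
    simpa using this
  have hy2 : (1 - z) • y = 0 := by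
    have : ((1 : Matrix (Fin p) (Fin p) ℂ) - z • 1) *ᵥ y = (1 - z) • y := by
      rw [Matrix.sub_mulVec, Matrix.one_mulVec, Matrix.smul_mulVec, Matrix.one_mulVec,
        sub_smul, one_smul]
    rwa [this] at htop2
  -- use Rosenbrock injectivity
  have key : ∀ y' : Fin p → ℂ,
      (A₀.map Complex.ofReal - z • 1) *ᵥ x + (E₀.map Complex.ofReal) *ᵥ y' = 0 →
      Sum.elim x y' = 0 := by
    intro y' h1
    apply hR (Sum.elim x y')
    rw [Matrix.fromBlocks_mulVec]
    ext (i | j)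
    · simpa using congrFun h1 i
    · simpa using congrFun hC j
  rcases eq_or_ne z 1 with hz | hz
  · subst hz
    have := key y htop1
    rw [hvxy, this]
  · have hy0 : y = 0 := by
      rcases smul_eq_zero.mp hy2 with h | h
      · exact absurd (by linear_combination -h : z = 1) hz
      · exact h
    rw [hy0] at htop1
    simp only [Matrix.mulVec_zero, add_zero] at htop1
    have := key 0 (by simpa using htop1)
    have hx0 : x = 0 := by
      funext i; exact congrFun this (Sum.inl i)
    rw [hvxy, hx0, hy0]
    ext (i | j) <;> simp
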